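/- If K_1 and K_2 are disjoint compact subsets of C, then φ(K_1 ∪ K_2) = φ(K_1) + φ(K_2). -/

import Mathlib

open MeasureTheory Matrix Set Filter Topology
open scoped ENNReal

noncomputable section

/-- The space `C` of continuous functions on `[0,1]` vanishing at `0`,
with the supremum metric (inherited from `C([0,1], ℝ)`). -/
abbrev Cz : Type := {f : C(Set.Icc (0:ℝ) 1, ℝ) // f ⟨0, ⟨le_refl 0, zero_le_one⟩⟩ = 0}

/-- The projection `π_n : C → ℝ^n`, `x ↦ (x(t_1), …, x(t_n))`. -/
def proj (t : ℕ → ℝ) (ht : ∀ k, t k ∈ Set.Ioc (0:ℝ) 1) (n : ℕ) (x : Cz) : Fin n → ℝ :=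
  fun i => (x : C(Set.Icc (0:ℝ) 1, ℝ)) ⟨t i, Set.Ioc_subset_Icc_self (ht i)⟩

/-- The covariance matrix `M_n` with entries `min (t j) (t r)`. -/
def covM (t : ℕ → ℝ) (n : ℕ) : Matrix (Fin n) (Fin n) ℝ :=
  Matrix.of fun j r => min (t (j : ℕ)) (t (r : ℕ))

/-- The centered Gaussian measure on `ℝ^n` with (positive definite) covariance matrix `M`:
the measure with density `u ↦ ((2π)^n det M)^{-1/2} exp (-⟨u, M⁻¹ u⟩ / 2)` w.r.t. Lebesgue
measure. -/
def gauss (n : ℕ) (M : Matrix (Fin n) (Fin n) ℝ) : Measure (Fin n → ℝ) :=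
  volume.withDensity fun u =>
    ENNReal.ofReal ((((2 * Real.pi) ^ n * M.det) ^ (-(1:ℝ)/2 : ℝ)) *
      Real.exp (-(u ⬝ᵥ M⁻¹.mulVec u) / 2))

/-- `φ(K) = inf_{n ≥ 1} ν_n (π_n(K))`. -/
def phi (t : ℕ → ℝ) (ht : ∀ k, t k ∈ Set.Ioc (0:ℝ) 1) (K : Set Cz) : ℝ≥0∞ :=
  ⨅ n : ℕ, gauss (n+1) (covM t (n+1)) (proj t ht (n+1) '' K)

/-- `μ(A) = sup {φ(K) : K ⊆ A, K compact}`. -/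
def mu (t : ℕ → ℝ) (ht : ∀ k, t k ∈ Set.Ioc (0:ℝ) 1) (A : Set Cz) : ℝ≥0∞ :=
  ⨆ (K : Set Cz) (_ : K ⊆ A) (_ : IsCompact K), phi t ht K


lemma indicator_int (a : ℝ) :
    Integrable ((Set.Ioc (0:ℝ) a).indicator (1 : ℝ → ℝ)) := by
  rw [integrable_indicator_iff measurableSet_Ioc]
  exact integrableOn_const (by simp [Real.volume_Ioc])

lemma indicator_mul (a b : ℝ) :
    (fun s => (Set.Ioc (0:ℝ) a).indicator (1 : ℝ → ℝ) s * (Set.Ioc (0:ℝ) b).indicator (1 : ℝ → ℝ) s)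
      = (Set.Ioc (0:ℝ) (min a b)).indicator (1 : ℝ → ℝ) := by
  have h : Set.Ioc (0:ℝ) a ∩ Set.Ioc (0:ℝ) b = Set.Ioc (0:ℝ) (min a b) := by
    rw [Set.Ioc_inter_Ioc, max_self]
  funext s
  rw [← h, Set.inter_indicator_one]
  rfl

lemma integral_indicator_min (a b : ℝ) (ha : 0 < a) (hb : 0 < b) :
    ∫ s, (Set.Ioc (0:ℝ) a).indicator (1 : ℝ → ℝ) s * (Set.Ioc (0:ℝ) b).indicator (1 : ℝ → ℝ) s
      = min a b := by
  rw [indicator_mul, MeasureTheory.integral_indicator_one measurableSet_Ioc, measureReal_def, Real.volume_Ioc,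
    ENNReal.toReal_ofReal (by simp [le_min ha.le hb.le])]
  simp

lemma covM_posDef (t : ℕ → ℝ) (ht : ∀ k, t k ∈ Set.Ioc (0:ℝ) 1)
    (htinj : Function.Injective t) (n : ℕ) : (covM t n).PosDef := by
  have herm : (covM t n).IsHermitian := by
    ext j k
    simp [covM, Matrix.conjTranspose_apply, min_comm]
  refine posDef_iff_dotProduct_mulVec.mpr ⟨herm, fun x hx => ?_⟩
  have hstar : star x = x := by funext i; simp
  rw [hstar]
  -- the step function
  set g : ℝ → ℝ := fun s => ∑ i : Fin n, x i * (Set.Ioc (0:ℝ) (t i)).indicator (1 : ℝ → ℝ) s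
    with hg
  have hint_i : ∀ i : Fin n, Integrable
      (fun s => x i * (Set.Ioc (0:ℝ) (t i)).indicator (1 : ℝ → ℝ) s) := fun i =>
    (indicator_int (t i)).const_mul _
  have hgint : Integrable g := integrable_finset_sum _ fun i _ => hint_i i
  have hterm : ∀ i j : Fin n, Integrable (fun s =>
      (x i * (Set.Ioc (0:ℝ) (t i)).indicator (1 : ℝ → ℝ) s) *
      (x j * (Set.Ioc (0:ℝ) (t j)).indicator (1 : ℝ → ℝ) s)) := by
    intro i j
    have : (fun s =>
        (x i * (Set.Ioc (0:ℝ) (t i)).indicator (1 : ℝ → ℝ) s) *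
        (x j * (Set.Ioc (0:ℝ) (t j)).indicator (1 : ℝ → ℝ) s)) =
        fun s => (x i * x j) * (Set.Ioc (0:ℝ) (min (t i) (t j))).indicator (1 : ℝ → ℝ) s := by
      funext s
      rw [← congrFun (indicator_mul (t i) (t j)) s]
      ring
    rw [this]
    exact (indicator_int _).const_mul _
  -- ∫ g^2 equals the quadratic form
  have key : ∫ s, g s * g s = x ⬝ᵥ (covM t n) *ᵥ x := by
    have expand : ∀ s, g s * g s = ∑ i : Fin n, ∑ j : Fin n,
        (x i * (Set.Ioc (0:ℝ) (t i)).indicator (1 : ℝ → ℝ) s) *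
        (x j * (Set.Ioc (0:ℝ) (t j)).indicator (1 : ℝ → ℝ) s) := by
      intro s
      rw [hg]
      rw [Finset.sum_mul_sum]
    simp_rw [expand]
    rw [integral_finset_sum _ (fun i _ => integrable_finset_sum _ fun j _ => hterm i j)]
    have : ∀ i : Fin n, ∫ s, (∑ j : Fin n,
        (x i * (Set.Ioc (0:ℝ) (t i)).indicator (1 : ℝ → ℝ) s) *
        (x j * (Set.Ioc (0:ℝ) (t j)).indicator (1 : ℝ → ℝ) s))
        = ∑ j : Fin n, (x i * x j) * min (t i) (t j) := by
      intro i
      rw [integral_finset_sum _ (fun j _ => hterm i j)]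
      refine Finset.sum_congr rfl fun j _ => ?_
      have : (fun s =>
          (x i * (Set.Ioc (0:ℝ) (t i)).indicator (1 : ℝ → ℝ) s) *
          (x j * (Set.Ioc (0:ℝ) (t j)).indicator (1 : ℝ → ℝ) s)) =
          fun s => (x i * x j) * ((Set.Ioc (0:ℝ) (t i)).indicator (1 : ℝ → ℝ) s *
            (Set.Ioc (0:ℝ) (t j)).indicator (1 : ℝ → ℝ) s) := by
        funext s; ring
      rw [this, MeasureTheory.integral_const_mul,
        integral_indicator_min _ _ (ht i).1 (ht j).1]
    simp_rw [this]
    simp only [dotProduct, Matrix.mulVec, covM, Matrix.of_apply, Finset.mul_sum]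
    refine Finset.sum_congr rfl fun i _ => Finset.sum_congr rfl fun j _ => by ring
  rw [← key]
  -- positivity of ∫ g^2
  obtain ⟨i₀, hi₀S, hi₀max⟩ := Finset.exists_max_image (Finset.univ.filter fun i => x i ≠ 0)
    (fun i => t i) (by
      obtain ⟨i, hi⟩ := Function.ne_iff.1 hx
      exact ⟨i, Finset.mem_filter.2 ⟨Finset.mem_univ _, hi⟩⟩)
  have hx₀ : x i₀ ≠ 0 := (Finset.mem_filter.1 hi₀S).2
  -- find m with 0 ≤ m < t i₀ bounding the other support points
  obtain ⟨m, hm0, hmlt, hmbd⟩ : ∃ m : ℝ, 0 ≤ m ∧ m < t i₀ ∧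
      ∀ i ∈ (Finset.univ.filter fun i => x i ≠ 0).erase i₀, t i ≤ m := by
    rcases ((Finset.univ.filter fun i => x i ≠ 0).erase i₀).eq_empty_or_nonempty with he | hne
    · exact ⟨0, le_refl 0, (ht i₀).1, by simp [he]⟩
    · obtain ⟨b, hbS, hbmax⟩ := Finset.exists_max_image ((Finset.univ.filter fun i => x i ≠ 0).erase i₀) (fun i => t i) hne
      refine ⟨t b, (ht b).1.le, ?_, hbmax⟩
      have hbne : b ≠ i₀ := (Finset.mem_erase.1 hbS).1
      have : t b ≤ t i₀ := hi₀max b (Finset.mem_erase.1 hbS).2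
      exact lt_of_le_of_ne this fun h => hbne (Fin.val_injective (htinj h))
  have hgs : ∀ s ∈ Set.Ioo m (t i₀), g s = x i₀ := by
    intro s hs
    simp only [hg]
    rw [Finset.sum_eq_single i₀]
    · have : s ∈ Set.Ioc (0:ℝ) (t i₀) := ⟨lt_of_le_of_lt hm0 hs.1, hs.2.le⟩
      simp [Set.indicator_of_mem this]
    · intro i _ hne
      by_cases hxi : x i = 0
      · simp [hxi]
      · have hiS : i ∈ (Finset.univ.filter fun i => x i ≠ 0).erase i₀ :=
          Finset.mem_erase.2 ⟨hne, Finset.mem_filter.2 ⟨Finset.mem_univ _, hxi⟩⟩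
        have : s ∉ Set.Ioc (0:ℝ) (t i) := fun hmem =>
          absurd hmem.2 (not_le.2 (lt_of_le_of_lt (hmbd i hiS) hs.1))
        simp [Set.indicator_of_notMem this]
    · intro h; exact absurd (Finset.mem_univ i₀) h
  have hgg_nonneg : 0 ≤ᵐ[volume] fun s => g s * g s :=
    Filter.Eventually.of_forall fun s => mul_self_nonneg _
  have hggint : Integrable (fun s => g s * g s) := by
    have expand : (fun s => g s * g s) = fun s => ∑ i : Fin n, ∑ j : Fin n,
        (x i * (Set.Ioc (0:ℝ) (t i)).indicator (1 : ℝ → ℝ) s) *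
        (x j * (Set.Ioc (0:ℝ) (t j)).indicator (1 : ℝ → ℝ) s) := by
      funext s
      rw [hg, Finset.sum_mul_sum]
    rw [expand]
    exact integrable_finset_sum _ fun i _ => integrable_finset_sum _ fun j _ => hterm i j
  have hsub : ∫ s in Set.Ioo m (t i₀), g s * g s ≤ ∫ s, g s * g s :=
    setIntegral_le_integral hggint hgg_nonneg
  have hval : ∫ s in Set.Ioo m (t i₀), g s * g s = (x i₀ * x i₀) * (t i₀ - m) := by
    rw [setIntegral_congr_fun measurableSet_Ioo (fun s hs => by rw [hgs s hs])]
    simp [Real.volume_Ioo, ENNReal.toReal_ofReal (by linarith : (0:ℝ) ≤ t i₀ - m),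
      max_eq_left (by linarith : (0:ℝ) ≤ t i₀ - m)]
    ring
  have : 0 < (x i₀ * x i₀) * (t i₀ - m) := by
    have := mul_self_pos.2 hx₀
    nlinarith
  linarith [hsub, hval.symm.le]

section Block
variable {n : ℕ} {M : Matrix (Fin (n+1)) (Fin (n+1)) ℝ} {A : Matrix (Fin n) (Fin n) ℝ}
lemma posdef_inv_diag_pos (hM : M.PosDef) : 0 < M⁻¹ (Fin.last n) (Fin.last n) := by
  have hQ : (M⁻¹).PosDef := hM.inv
  have := hQ.dotProduct_mulVec_pos (x := (Pi.single (Fin.last n) 1 : Fin (n+1) → ℝ)) (by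
    intro h
    have := congrFun h (Fin.last n)
    simp [Pi.single_apply] at this)
  have hstar : star ((Pi.single (Fin.last n) 1 : Fin (n+1) → ℝ)) = (Pi.single (Fin.last n) 1 : Fin (n+1) → ℝ) := by
    funext i
    simp only [Pi.star_apply, Pi.single_apply]
    split <;> simp
  rw [hstar] at this
  simpa [dotProduct, Matrix.mulVec, Pi.single_apply, Finset.sum_ite_eq',
    Finset.mul_sum] using this

lemma Qsymm (hM : M.PosDef) (j k : Fin (n+1)) : M⁻¹ j k = M⁻¹ k j := by
  have h : (M⁻¹).IsHermitian := hM.inv.isHermitian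
  have := congrFun (congrFun h j) k
  simpa [Matrix.conjTranspose_apply] using this.symm


/-- The inverse of the principal submatrix, expressed via the inverse of the full matrix. -/
lemma block_inv (hM : M.PosDef) (hA : A.PosDef)
    (hsub : ∀ j k : Fin n, M j.castSucc k.castSucc = A j k)
    (hQsymm : ∀ j k, M⁻¹ j k = M⁻¹ k j)
    (hα : 0 < M⁻¹ (Fin.last n) (Fin.last n)) :
    A⁻¹ = Matrix.of (fun j k : Fin n => M⁻¹ j.castSucc k.castSucc -
      M⁻¹ j.castSucc (Fin.last n) * M⁻¹ k.castSucc (Fin.last n) /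
        M⁻¹ (Fin.last n) (Fin.last n)) := by
  set Q := M⁻¹ with hQ
  set α := Q (Fin.last n) (Fin.last n) with hαdef
  have hMQ : M * Q = 1 := Matrix.mul_nonsing_inv M hM.det_pos.ne'.isUnit
  have e1 : ∀ j k : Fin n, (∑ l : Fin n, A j l * Q l.castSucc k.castSucc)
      + M j.castSucc (Fin.last n) * Q (Fin.last n) k.castSucc
      = if j = k then 1 else 0 := by
    intro j k
    have := congrFun (congrFun hMQ j.castSucc) k.castSucc
    rw [Matrix.mul_apply] at this
    rw [Fin.sum_univ_castSucc] at this
    simp only [hsub] at this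
    rw [this]
    simp [Matrix.one_apply, Fin.castSucc_inj]
  have e2 : ∀ j : Fin n, (∑ l : Fin n, A j l * Q l.castSucc (Fin.last n))
      + M j.castSucc (Fin.last n) * α = 0 := by
    intro j
    have := congrFun (congrFun hMQ j.castSucc) (Fin.last n)
    rw [Matrix.mul_apply] at this
    rw [Fin.sum_univ_castSucc] at this
    simp only [hsub] at this
    rw [this]
    simp [Matrix.one_apply, (Fin.castSucc_lt_last j).ne]
  refine (Matrix.inv_eq_right_inv ?_)
  ext j k
  rw [Matrix.mul_apply]
  simp only [Matrix.of_apply]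
  have expand : ∑ l : Fin n, A j l *
      (Q l.castSucc k.castSucc - Q l.castSucc (Fin.last n) * Q k.castSucc (Fin.last n) / α)
      = (∑ l : Fin n, A j l * Q l.castSucc k.castSucc)
        - (∑ l : Fin n, A j l * Q l.castSucc (Fin.last n)) * (Q k.castSucc (Fin.last n) / α) := by
    rw [Finset.sum_mul]
    rw [← Finset.sum_sub_distrib]
    refine Finset.sum_congr rfl fun l _ => by ring
  rw [expand]
  have h1 := e1 j k
  have h2 := e2 j
  have hrk : Q (Fin.last n) k.castSucc = Q k.castSucc (Fin.last n) := hQsymm _ _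
  rw [hrk] at h1
  have hsum2 : (∑ l : Fin n, A j l * Q l.castSucc (Fin.last n))
      = -(M j.castSucc (Fin.last n) * α) := by linarith
  rw [hsum2, Matrix.one_apply]
  have hαne : α ≠ 0 := hα.ne'
  split_ifs at h1 ⊢ with hjk
  · field_simp
    linear_combination h1
  · field_simp
    linear_combination h1

/-- Determinant relation: `α · det M = det A`. -/
lemma block_det (hM : M.PosDef)
    (hsub : ∀ j k : Fin n, M j.castSucc k.castSucc = A j k) :
    M⁻¹ (Fin.last n) (Fin.last n) * M.det = A.det := by
  have hdet : IsUnit M.det := hM.det_pos.ne'.isUnit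
  have hinv : M⁻¹ = (↑hdet.unit⁻¹ : ℝ) • M.adjugate := Matrix.nonsing_inv_apply M hdet
  have hadj : M.adjugate (Fin.last n) (Fin.last n) = A.det := by
    rw [Matrix.adjugate_apply]
    rw [Matrix.det_succ_row _ (Fin.last n)]
    rw [Finset.sum_eq_single (Fin.last n)]
    · have hrow : (M.updateRow (Fin.last n) (Pi.single (Fin.last n) 1))
          (Fin.last n) (Fin.last n) = 1 := by
        rw [Matrix.updateRow_self]; simp
      have hsubm : ((M.updateRow (Fin.last n) (Pi.single (Fin.last n) 1)).submatrix
          (Fin.last n).succAbove (Fin.last n).succAbove) = A := by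
        ext j k
        rw [Matrix.submatrix_apply, Fin.succAbove_last, Matrix.updateRow_ne
          (Fin.castSucc_lt_last j).ne]
        exact hsub j k
      rw [hrow, hsubm]
      have : (-1 : ℝ) ^ ((Fin.last n : ℕ) + (Fin.last n : ℕ)) = 1 :=
        Even.neg_one_pow ⟨n, by simp [Fin.val_last]⟩
      rw [this]; ring
    · intro b _ hb
      have : (M.updateRow (Fin.last n) (Pi.single (Fin.last n) 1)) (Fin.last n) b = 0 := by
        rw [Matrix.updateRow_self, Pi.single_apply, if_neg hb]
      rw [this]; ring
    · intro h; exact absurd (Finset.mem_univ _) h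
  rw [hinv]
  simp only [Matrix.smul_apply, smul_eq_mul]
  rw [hadj]
  rw [mul_right_comm, IsUnit.val_inv_mul, one_mul]


lemma quad_decomp (hM : M.PosDef) (hA : A.PosDef)
    (hsub : ∀ j k : Fin n, M j.castSucc k.castSucc = A j k) (v : Fin n → ℝ) (s : ℝ) :
    (Fin.snoc v s : Fin (n+1) → ℝ) ⬝ᵥ M⁻¹ *ᵥ (Fin.snoc v s : Fin (n+1) → ℝ) =
      v ⬝ᵥ A⁻¹ *ᵥ v + M⁻¹ (Fin.last n) (Fin.last n) *
        (s + (∑ l : Fin n, M⁻¹ l.castSucc (Fin.last n) * v l) /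
          M⁻¹ (Fin.last n) (Fin.last n))^2 := by
  have hQsymm := fun j k => Qsymm (M := M) hM j k
  have hα := posdef_inv_diag_pos hM
  have hαne : M⁻¹ (Fin.last n) (Fin.last n) ≠ 0 := hα.ne'
  have hmv : ∀ j : Fin (n+1), (M⁻¹ *ᵥ (Fin.snoc v s : Fin (n+1) → ℝ)) j
      = (∑ k : Fin n, M⁻¹ j k.castSucc * v k) + M⁻¹ j (Fin.last n) * s := by
    intro j
    simp only [Matrix.mulVec, dotProduct]
    rw [Fin.sum_univ_castSucc]
    simp [Fin.snoc_castSucc, Fin.snoc_last]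
  have hLHS : (Fin.snoc v s : Fin (n+1) → ℝ) ⬝ᵥ M⁻¹ *ᵥ (Fin.snoc v s : Fin (n+1) → ℝ)
      = (∑ j : Fin n, v j * ∑ k : Fin n, M⁻¹ j.castSucc k.castSucc * v k)
        + 2 * (∑ l : Fin n, M⁻¹ l.castSucc (Fin.last n) * v l) * s
        + M⁻¹ (Fin.last n) (Fin.last n) * s^2 := by
    rw [dotProduct, Fin.sum_univ_castSucc]
    simp only [Fin.snoc_castSucc, Fin.snoc_last, hmv]
    have e1 : ∑ j : Fin n, v j * ((∑ k : Fin n, M⁻¹ j.castSucc k.castSucc * v k)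
        + M⁻¹ j.castSucc (Fin.last n) * s)
        = (∑ j : Fin n, v j * ∑ k : Fin n, M⁻¹ j.castSucc k.castSucc * v k)
          + (∑ l : Fin n, M⁻¹ l.castSucc (Fin.last n) * v l) * s := by
      simp_rw [mul_add]
      rw [Finset.sum_add_distrib, Finset.sum_mul]
      congr 1
      exact Finset.sum_congr rfl fun j _ => by ring
    have e2 : ∑ k : Fin n, M⁻¹ (Fin.last n) k.castSucc * v k
        = ∑ l : Fin n, M⁻¹ l.castSucc (Fin.last n) * v l :=
      Finset.sum_congr rfl fun k _ => by rw [hQsymm]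
    rw [e1, e2]
    ring
  have hRHSA : v ⬝ᵥ A⁻¹ *ᵥ v
      = (∑ j : Fin n, v j * ∑ k : Fin n, M⁻¹ j.castSucc k.castSucc * v k)
        - (∑ l : Fin n, M⁻¹ l.castSucc (Fin.last n) * v l)^2 /
          M⁻¹ (Fin.last n) (Fin.last n) := by
    rw [block_inv hM hA hsub hQsymm hα]
    rw [dotProduct]
    have hmv2 : ∀ j : Fin n, ((Matrix.of (fun j k : Fin n => M⁻¹ j.castSucc k.castSucc -
        M⁻¹ j.castSucc (Fin.last n) * M⁻¹ k.castSucc (Fin.last n) /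
          M⁻¹ (Fin.last n) (Fin.last n))) *ᵥ v) j
        = (∑ k : Fin n, M⁻¹ j.castSucc k.castSucc * v k)
          - M⁻¹ j.castSucc (Fin.last n) *
            (∑ l : Fin n, M⁻¹ l.castSucc (Fin.last n) * v l) /
              M⁻¹ (Fin.last n) (Fin.last n) := by
      intro j
      simp only [Matrix.mulVec, dotProduct, Matrix.of_apply]
      calc ∑ k : Fin n, (M⁻¹ j.castSucc k.castSucc -
            M⁻¹ j.castSucc (Fin.last n) * M⁻¹ k.castSucc (Fin.last n) /
              M⁻¹ (Fin.last n) (Fin.last n)) * v k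
          = ∑ k : Fin n, (M⁻¹ j.castSucc k.castSucc * v k -
              (M⁻¹ j.castSucc (Fin.last n) / M⁻¹ (Fin.last n) (Fin.last n)) *
                (M⁻¹ k.castSucc (Fin.last n) * v k)) :=
            Finset.sum_congr rfl fun k _ => by ring
        _ = _ := by
            rw [Finset.sum_sub_distrib, ← Finset.mul_sum]
            ring
    simp only [hmv2]
    calc ∑ j : Fin n, v j * ((∑ k : Fin n, M⁻¹ j.castSucc k.castSucc * v k)
          - M⁻¹ j.castSucc (Fin.last n) *
            (∑ l : Fin n, M⁻¹ l.castSucc (Fin.last n) * v l) /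
              M⁻¹ (Fin.last n) (Fin.last n))
        = ∑ j : Fin n, (v j * (∑ k : Fin n, M⁻¹ j.castSucc k.castSucc * v k)
          - ((∑ l : Fin n, M⁻¹ l.castSucc (Fin.last n) * v l) /
              M⁻¹ (Fin.last n) (Fin.last n)) * (M⁻¹ j.castSucc (Fin.last n) * v j)) :=
          Finset.sum_congr rfl fun j _ => by ring
      _ = _ := by
          rw [Finset.sum_sub_distrib, ← Finset.mul_sum]
          ring
  rw [hLHS, hRHSA]
  set a := M⁻¹ (Fin.last n) (Fin.last n) with ha
  set b := ∑ l : Fin n, M⁻¹ l.castSucc (Fin.last n) * v l with hb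
  set c := ∑ j : Fin n, v j * ∑ k : Fin n, M⁻¹ j.castSucc k.castSucc * v k with hc
  field_simp
  ring


end Block

lemma integrable_shift_gauss {a : ℝ} (ha : 0 < a) (c : ℝ) :
    Integrable (fun s : ℝ => Real.exp (-(a * (s + c)^2) / 2)) := by
  have h : Integrable (fun x : ℝ => Real.exp (-(a/2) * x^2)) :=
    integrable_exp_neg_mul_sq (by linarith)
  have h2 := h.comp_add_right c
  refine h2.congr ?_
  refine Filter.Eventually.of_forall fun s => ?_
  ring_nf

lemma integral_shift_gauss {a : ℝ} (ha : 0 < a) (c : ℝ) :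
    ∫ s : ℝ, Real.exp (-(a * (s + c)^2) / 2) = Real.sqrt (2 * Real.pi / a) := by
  have h1 : ∀ s : ℝ, Real.exp (-(a * (s + c)^2) / 2) = Real.exp (-(a/2) * (s + c)^2) := by
    intro s; ring_nf
  simp_rw [h1]
  rw [integral_add_right_eq_self (fun x : ℝ => Real.exp (-(a/2) * x^2)) c]
  rw [integral_gaussian]
  congr 1
  rw [div_div_eq_mul_div]
  ring

lemma const_rel (n : ℕ) {dM dA a : ℝ} (hdM : 0 < dM) (ha : 0 < a) (hrel : a * dM = dA) :
    ((2 * Real.pi) ^ (n+1) * dM) ^ (-(1:ℝ)/2 : ℝ) * Real.sqrt (2 * Real.pi / a)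
      = ((2 * Real.pi) ^ n * dA) ^ (-(1:ℝ)/2 : ℝ) := by
  have h2pi : (0:ℝ) < 2 * Real.pi := Real.two_pi_pos
  have hdA : 0 < dA := by rw [← hrel]; positivity
  have hxM : (0:ℝ) < (2 * Real.pi) ^ (n+1) * dM := by positivity
  have hxA : (0:ℝ) < (2 * Real.pi) ^ n * dA := by positivity
  have hL : 0 ≤ ((2 * Real.pi) ^ (n+1) * dM) ^ (-(1:ℝ)/2 : ℝ) * Real.sqrt (2 * Real.pi / a) := by
    positivity
  have hR : 0 ≤ ((2 * Real.pi) ^ n * dA) ^ (-(1:ℝ)/2 : ℝ) := by positivity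
  have hsq : (((2 * Real.pi) ^ (n+1) * dM) ^ (-(1:ℝ)/2 : ℝ) * Real.sqrt (2 * Real.pi / a)) ^ 2
      = (((2 * Real.pi) ^ n * dA) ^ (-(1:ℝ)/2 : ℝ)) ^ 2 := by
    have e1 : ∀ x : ℝ, 0 < x → (x ^ (-(1:ℝ)/2 : ℝ)) ^ 2 = x⁻¹ := by
      intro x hx
      rw [← Real.rpow_natCast (x ^ (-(1:ℝ)/2 : ℝ)) 2, ← Real.rpow_mul hx.le]
      norm_num
      exact Real.rpow_neg_one x
    rw [mul_pow, e1 _ hxM, e1 _ hxA, Real.sq_sqrt (by positivity)]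
    field_simp
    rw [← hrel]
    ring
  calc ((2 * Real.pi) ^ (n+1) * dM) ^ (-(1:ℝ)/2 : ℝ) * Real.sqrt (2 * Real.pi / a)
      = Real.sqrt ((((2 * Real.pi) ^ (n+1) * dM) ^ (-(1:ℝ)/2 : ℝ)
          * Real.sqrt (2 * Real.pi / a)) ^ 2) := (Real.sqrt_sq hL).symm
    _ = Real.sqrt ((((2 * Real.pi) ^ n * dA) ^ (-(1:ℝ)/2 : ℝ)) ^ 2) := by rw [hsq]
    _ = _ := Real.sqrt_sq hR

lemma marginal_density {n : ℕ} {M : Matrix (Fin (n+1)) (Fin (n+1)) ℝ}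
    {A : Matrix (Fin n) (Fin n) ℝ} (hM : M.PosDef) (hA : A.PosDef)
    (hsub : ∀ j k : Fin n, M j.castSucc k.castSucc = A j k) (v : Fin n → ℝ) :
    ∫⁻ s : ℝ, ENNReal.ofReal ((((2 * Real.pi) ^ (n+1) * M.det) ^ (-(1:ℝ)/2 : ℝ)) *
        Real.exp (-((Fin.snoc v s : Fin (n+1) → ℝ) ⬝ᵥ M⁻¹ *ᵥ (Fin.snoc v s : Fin (n+1) → ℝ)) / 2))
      = ENNReal.ofReal ((((2 * Real.pi) ^ n * A.det) ^ (-(1:ℝ)/2 : ℝ)) *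
        Real.exp (-(v ⬝ᵥ A⁻¹ *ᵥ v) / 2)) := by
  have hα := posdef_inv_diag_pos hM
  have hCM : (0:ℝ) < ((2 * Real.pi) ^ (n+1) * M.det) ^ (-(1:ℝ)/2 : ℝ) :=
    Real.rpow_pos_of_pos (mul_pos (pow_pos Real.two_pi_pos _) hM.det_pos) _
  have hpt : ∀ s : ℝ, (((2 * Real.pi) ^ (n+1) * M.det) ^ (-(1:ℝ)/2 : ℝ)) *
      Real.exp (-((Fin.snoc v s : Fin (n+1) → ℝ) ⬝ᵥ M⁻¹ *ᵥ (Fin.snoc v s : Fin (n+1) → ℝ)) / 2)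
      = ((((2 * Real.pi) ^ (n+1) * M.det) ^ (-(1:ℝ)/2 : ℝ)) * Real.exp (-(v ⬝ᵥ A⁻¹ *ᵥ v) / 2))
        * Real.exp (-(M⁻¹ (Fin.last n) (Fin.last n) *
            (s + (∑ l : Fin n, M⁻¹ l.castSucc (Fin.last n) * v l) /
              M⁻¹ (Fin.last n) (Fin.last n))^2) / 2) := by
    intro s
    rw [quad_decomp hM hA hsub v s]
    rw [mul_assoc, ← Real.exp_add]
    congr 2
    ring
  simp only [hpt]
  have hint : Integrable (fun s : ℝ =>
      ((((2 * Real.pi) ^ (n+1) * M.det) ^ (-(1:ℝ)/2 : ℝ)) * Real.exp (-(v ⬝ᵥ A⁻¹ *ᵥ v) / 2))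
        * Real.exp (-(M⁻¹ (Fin.last n) (Fin.last n) *
            (s + (∑ l : Fin n, M⁻¹ l.castSucc (Fin.last n) * v l) /
              M⁻¹ (Fin.last n) (Fin.last n))^2) / 2)) :=
    (integrable_shift_gauss hα _).const_mul _
  have hnn : 0 ≤ᵐ[volume] fun s : ℝ =>
      ((((2 * Real.pi) ^ (n+1) * M.det) ^ (-(1:ℝ)/2 : ℝ)) * Real.exp (-(v ⬝ᵥ A⁻¹ *ᵥ v) / 2))
        * Real.exp (-(M⁻¹ (Fin.last n) (Fin.last n) *
            (s + (∑ l : Fin n, M⁻¹ l.castSucc (Fin.last n) * v l) /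
              M⁻¹ (Fin.last n) (Fin.last n))^2) / 2) :=
    Filter.Eventually.of_forall fun s => by positivity
  rw [← MeasureTheory.ofReal_integral_eq_lintegral_ofReal hint hnn]
  rw [MeasureTheory.integral_const_mul, integral_shift_gauss hα]
  congr 1
  have hc := const_rel n hM.det_pos hα (block_det hM hsub)
  linear_combination Real.exp (-(v ⬝ᵥ A⁻¹ *ᵥ v) / 2) * hc

lemma measurable_quadform {m : ℕ} (Q : Matrix (Fin m) (Fin m) ℝ) :
    Measurable fun u : Fin m → ℝ => u ⬝ᵥ Q *ᵥ u := by
  unfold dotProduct Matrix.mulVec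
  exact Finset.measurable_sum _ fun i _ => (measurable_pi_apply i).mul
    (Finset.measurable_sum _ fun j _ => measurable_const.mul (measurable_pi_apply j))

lemma measurable_gaussdens {m : ℕ} (C : ℝ) (Q : Matrix (Fin m) (Fin m) ℝ) :
    Measurable fun u : Fin m → ℝ => ENNReal.ofReal (C * Real.exp (-(u ⬝ᵥ Q *ᵥ u) / 2)) :=
  ((((measurable_quadform Q).neg.div_const 2).exp).const_mul C).ennreal_ofReal

lemma gauss_marginal {n : ℕ} {M : Matrix (Fin (n+1)) (Fin (n+1)) ℝ}
    {A : Matrix (Fin n) (Fin n) ℝ} (hM : M.PosDef) (hA : A.PosDef)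
    (hsub : ∀ j k : Fin n, M j.castSucc k.castSucc = A j k)
    {S : Set (Fin n → ℝ)} (hS : MeasurableSet S) :
    gauss (n+1) M ((fun (u : Fin (n+1) → ℝ) (i : Fin n) => u i.castSucc) ⁻¹' S)
      = gauss n A S := by
  have hp : Measurable fun (u : Fin (n+1) → ℝ) (i : Fin n) => u i.castSucc :=
    measurable_pi_iff.2 fun i => measurable_pi_apply _
  set f : (Fin (n+1) → ℝ) → ℝ≥0∞ := fun u =>
    ENNReal.ofReal ((((2 * Real.pi) ^ (n+1) * M.det) ^ (-(1:ℝ)/2 : ℝ)) *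
      Real.exp (-(u ⬝ᵥ M⁻¹ *ᵥ u) / 2)) with hf
  have hfm : Measurable f := measurable_gaussdens _ _
  set e := MeasurableEquiv.piFinSuccAbove (fun _ : Fin (n+1) => ℝ) (Fin.last n) with he
  have hvp : MeasurePreserving e.symm :=
    (volume_preserving_piFinSuccAbove (fun _ : Fin (n+1) => ℝ) (Fin.last n)).symm e
  have hsymm : ∀ (s : ℝ) (v : Fin n → ℝ), e.symm (s, v) = Fin.snoc v s := by
    intro s v
    rw [he]
    simp only [MeasurableEquiv.piFinSuccAbove_symm_apply]
    simp [Fin.insertNth_last, Fin.snocEquiv]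
  have hset : e.symm ⁻¹' ((fun (u : Fin (n+1) → ℝ) (i : Fin n) => u i.castSucc) ⁻¹' S)
      = Set.univ ×ˢ S := by
    ext z
    obtain ⟨s, v⟩ := z
    simp only [Set.mem_preimage, Set.mem_prod, Set.mem_univ, true_and, hsymm]
    have : (fun i : Fin n => (Fin.snoc v s : Fin (n+1) → ℝ) i.castSucc) = v := by
      funext i; rw [Fin.snoc_castSucc]
    rw [this]
  rw [gauss, gauss, withDensity_apply _ (hp hS), withDensity_apply _ hS]
  rw [← hvp.map_eq]
  rw [setLIntegral_map (hp hS) hfm e.symm.measurable]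
  rw [hset]
  rw [MeasureTheory.Measure.volume_eq_prod, ← Measure.prod_restrict, Measure.restrict_univ]
  rw [MeasureTheory.lintegral_prod _ (by
    exact (hfm.comp e.symm.measurable).aemeasurable)]
  have inner : ∀ s_v : ℝ × (Fin n → ℝ), True := fun _ => trivial
  calc ∫⁻ s : ℝ, ∫⁻ v in S, f (e.symm (s, v)) ∂volume ∂volume
      = ∫⁻ v in S, ∫⁻ s : ℝ, f (e.symm (s, v)) ∂volume ∂volume := by
        exact lintegral_lintegral_swap ((hfm.comp e.symm.measurable).aemeasurable)
    _ = ∫⁻ v in S, ENNReal.ofReal ((((2 * Real.pi) ^ n * A.det) ^ (-(1:ℝ)/2 : ℝ)) *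
          Real.exp (-(v ⬝ᵥ A⁻¹ *ᵥ v) / 2)) ∂volume := by
        refine lintegral_congr fun v => ?_
        simp_rw [hsymm]
        exact marginal_density hM hA hsub v
    _ = _ := rfl

lemma proj_continuous (t : ℕ → ℝ) (ht : ∀ k, t k ∈ Set.Ioc (0:ℝ) 1) (n : ℕ) :
    Continuous (proj t ht n) := by
  apply continuous_pi
  intro i
  exact (continuous_eval_const _).comp continuous_subtype_val

lemma covM_sub (t : ℕ → ℝ) (n : ℕ) (j k : Fin n) :
    (covM t (n+1)) j.castSucc k.castSucc = covM t n j k := by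
  simp [covM]

lemma gauss_proj_anti (t : ℕ → ℝ) (ht : ∀ k, t k ∈ Set.Ioc (0:ℝ) 1)
    (htinj : Function.Injective t) (K : Set Cz) (hK : IsCompact K) (n : ℕ) :
    gauss (n+2) (covM t (n+2)) (proj t ht (n+2) '' K)
      ≤ gauss (n+1) (covM t (n+1)) (proj t ht (n+1) '' K) := by
  have hS : MeasurableSet (proj t ht (n+1) '' K) :=
    (hK.image (proj_continuous t ht (n+1))).measurableSet
  have hsubset : proj t ht (n+2) '' K ⊆
      (fun (u : Fin (n+2) → ℝ) (i : Fin (n+1)) => u i.castSucc) ⁻¹' (proj t ht (n+1) '' K) := by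
    rintro _ ⟨x, hx, rfl⟩
    refine ⟨x, hx, ?_⟩
    funext i
    simp [proj]
  calc gauss (n+2) (covM t (n+2)) (proj t ht (n+2) '' K)
      ≤ gauss (n+2) (covM t (n+2)) ((fun (u : Fin (n+2) → ℝ) (i : Fin (n+1)) =>
          u i.castSucc) ⁻¹' (proj t ht (n+1) '' K)) := measure_mono hsubset
    _ = gauss (n+1) (covM t (n+1)) (proj t ht (n+1) '' K) :=
        gauss_marginal (covM_posDef t ht htinj (n+2)) (covM_posDef t ht htinj (n+1))
          (fun j k => covM_sub t (n+1) j k) hS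

lemma exists_index_ne (t : ℕ → ℝ) (ht : ∀ k, t k ∈ Set.Ioc (0:ℝ) 1)
    (htdense : Set.Icc (0:ℝ) 1 ⊆ closure (Set.range t)) {x y : Cz} (hxy : x ≠ y) :
    ∃ k : ℕ, (x : C(Set.Icc (0:ℝ) 1, ℝ)) ⟨t k, Set.Ioc_subset_Icc_self (ht k)⟩
      ≠ (y : C(Set.Icc (0:ℝ) 1, ℝ)) ⟨t k, Set.Ioc_subset_Icc_self (ht k)⟩ := by
  by_contra hcon
  push_neg at hcon
  apply hxy
  have hD : Dense {p : Set.Icc (0:ℝ) 1 | (p : ℝ) ∈ Set.range t} := by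
    intro p
    rw [closure_subtype]
    have himg : Subtype.val '' {p : Set.Icc (0:ℝ) 1 | (p : ℝ) ∈ Set.range t} = Set.range t := by
      ext r
      constructor
      · rintro ⟨⟨v, hv⟩, hm, rfl⟩; exact hm
      · rintro ⟨k, rfl⟩
        exact ⟨⟨t k, Set.Ioc_subset_Icc_self (ht k)⟩, ⟨k, rfl⟩, rfl⟩
    rw [himg]
    exact htdense p.2
  have heq : Set.EqOn (⇑(x : C(Set.Icc (0:ℝ) 1, ℝ))) (⇑(y : C(Set.Icc (0:ℝ) 1, ℝ)))
      {p : Set.Icc (0:ℝ) 1 | (p : ℝ) ∈ Set.range t} := by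
    rintro p ⟨k, hk⟩
    have : p = ⟨t k, Set.Ioc_subset_Icc_self (ht k)⟩ := Subtype.ext hk.symm
    rw [this]
    exact hcon k
  have := Continuous.ext_on hD (x : C(Set.Icc (0:ℝ) 1, ℝ)).continuous
    (y : C(Set.Icc (0:ℝ) 1, ℝ)).continuous heq
  exact Subtype.ext (ContinuousMap.ext fun p => congrFun this p)

lemma eventually_disjoint (t : ℕ → ℝ) (ht : ∀ k, t k ∈ Set.Ioc (0:ℝ) 1)
    (htdense : Set.Icc (0:ℝ) 1 ⊆ closure (Set.range t))
    (K₁ K₂ : Set Cz) (hK₁ : IsCompact K₁) (hK₂ : IsCompact K₂)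
    (hdisj : Disjoint K₁ K₂) :
    ∃ N : ℕ, ∀ n, N ≤ n → Disjoint (proj t ht n '' K₁) (proj t ht n '' K₂) := by
  set ev : ℕ → Cz → ℝ := fun k x =>
    (x : C(Set.Icc (0:ℝ) 1, ℝ)) ⟨t k, Set.Ioc_subset_Icc_self (ht k)⟩ with hev
  have hevc : ∀ k, Continuous (ev k) := fun k =>
    (continuous_eval_const _).comp continuous_subtype_val
  set U : ℕ → Set (Cz × Cz) := fun N => ⋃ (k : ℕ) (_ : k < N),
    {z : Cz × Cz | ev k z.1 = ev k z.2}ᶜ with hU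
  have hUopen : ∀ N, IsOpen (U N) := fun N =>
    isOpen_iUnion fun k => isOpen_iUnion fun _ =>
      (isClosed_eq ((hevc k).comp continuous_fst) ((hevc k).comp continuous_snd)).isOpen_compl
  have hUmono : ∀ {N N' : ℕ}, N ≤ N' → U N ⊆ U N' := by
    intro N N' hNN'
    intro z hzmem
    simp only [hU, Set.mem_iUnion] at hzmem ⊢
    obtain ⟨k, hk, hzk⟩ := hzmem
    exact ⟨k, lt_of_lt_of_le hk hNN', hzk⟩
  have hcover : K₁ ×ˢ K₂ ⊆ ⋃ N : ℕ, U N := by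
    rintro ⟨x, y⟩ ⟨hx, hy⟩
    have hxy : x ≠ y := fun h => Set.disjoint_left.1 hdisj hx (h ▸ hy)
    obtain ⟨k, hk⟩ := exists_index_ne t ht htdense hxy
    exact Set.mem_iUnion.2 ⟨k + 1, Set.mem_iUnion.2 ⟨k, Set.mem_iUnion.2
      ⟨Nat.lt_succ_self k, hk⟩⟩⟩
  obtain ⟨F, hF⟩ := (hK₁.prod hK₂).elim_finite_subcover U hUopen hcover
  refine ⟨F.sup id, fun n hn => ?_⟩
  rw [Set.disjoint_left]
  rintro p ⟨x, hx, rfl⟩ ⟨y, hy, hpeq⟩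
  have hz : (x, y) ∈ U (F.sup id) := by
    have := hF (Set.mk_mem_prod hx hy)
    simp only [Set.mem_iUnion] at this
    obtain ⟨N, hNF, hmem⟩ := this
    exact hUmono (Finset.le_sup (f := id) hNF) hmem
  obtain ⟨k, hkN, hkne⟩ := by
    simpa only [hU, Set.mem_iUnion, Set.mem_compl_iff, Set.mem_setOf_eq] using hz
  have hkn : k < n := lt_of_lt_of_le hkN hn
  exact hkne (by
    have := congrFun hpeq ⟨k, hkn⟩
    simpa [proj, hev] using this.symm)


theorem stmt4 (t : ℕ → ℝ) (ht : ∀ k, t k ∈ Set.Ioc (0:ℝ) 1)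
    (htinj : Function.Injective t)
    (htdense : Set.Icc (0:ℝ) 1 ⊆ closure (Set.range t))
    (K₁ K₂ : Set Cz) (hK₁ : IsCompact K₁) (hK₂ : IsCompact K₂)
    (hdisj : Disjoint K₁ K₂) :
    phi t ht (K₁ ∪ K₂) = phi t ht K₁ + phi t ht K₂ := by
  obtain ⟨N, hN⟩ := eventually_disjoint t ht htdense K₁ K₂ hK₁ hK₂ hdisj
  set a : ℕ → ℝ≥0∞ := fun n => gauss (n+1) (covM t (n+1)) (proj t ht (n+1) '' K₁) with ha
  set b : ℕ → ℝ≥0∞ := fun n => gauss (n+1) (covM t (n+1)) (proj t ht (n+1) '' K₂) with hb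
  set c : ℕ → ℝ≥0∞ := fun n => gauss (n+1) (covM t (n+1)) (proj t ht (n+1) '' (K₁ ∪ K₂)) with hc
  have hA : Antitone a := antitone_nat_of_succ_le fun n => gauss_proj_anti t ht htinj K₁ hK₁ n
  have hB : Antitone b := antitone_nat_of_succ_le fun n => gauss_proj_anti t ht htinj K₂ hK₂ n
  have hC : Antitone c := antitone_nat_of_succ_le fun n =>
    gauss_proj_anti t ht htinj (K₁ ∪ K₂) (hK₁.union hK₂) n
  have hshift : ∀ (f : ℕ → ℝ≥0∞), Antitone f → (⨅ n, f n) = ⨅ n, f (n + N) := by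
    intro f hf
    apply le_antisymm
    · exact le_iInf fun n => iInf_le f (n + N)
    · exact le_iInf fun n => iInf_le_of_le n (hf (Nat.le_add_right n N))
  have hcab : ∀ n : ℕ, c (n + N) = a (n + N) + b (n + N) := by
    intro n
    have hd := hN (n + N + 1) (by omega)
    have hm : MeasurableSet (proj t ht (n + N + 1) '' K₂) :=
      (hK₂.image (proj_continuous t ht (n + N + 1))).measurableSet
    simp only [ha, hb, hc, Set.image_union]
    exact measure_union hd hm
  have h1 : phi t ht (K₁ ∪ K₂) = ⨅ n, c n := rfl
  have h2 : phi t ht K₁ = ⨅ n, a n := rfl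
  have h3 : phi t ht K₂ = ⨅ n, b n := rfl
  rw [h1, h2, h3, hshift c hC, hshift a hA, hshift b hB]
  rw [iInf_congr hcab]
  exact (ENNReal.iInf_add_iInf (f := fun n => a (n + N)) (g := fun n => b (n + N))
    fun i j => ⟨max i j, add_le_add (hA (by omega)) (hB (by omega))⟩).symm

end
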